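/- In the two-bidder two-item online setting, for every deterministic DSIC+IR mechanism achieving approximation factor H, for all N ≥ 2H, ε < 1/H, and w ∈ S_{N,ε} = {w : 0 < w₁ < ε, w₂ = N}, the thresholds satisfy π₂(w) > π₁(w) strictly (in particular π₂(w) ≥ 1 while π₁(w) < H·ε < 1). -/

import Mathlib

open scoped ENNReal

noncomputable section

/-- Nonnegative orthant of ℝ² (valid type space of a bidder). -/
def Nn (p : ℝ × ℝ) : Prop := 0 ≤ p.1 ∧ 0 ≤ p.2

/-- A deterministic mechanism for two unit-demand bidders `V`, `W` and two items.
`xV1 v w` is the (scenario-independent) allocation of item 1 to `V`, `xV2 v w`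
the allocation of item 2 to `V` in the scenario where both items arrive;
`pV1` is `V`'s payment in the only-item-1 scenario and `pV2` in the both-items
scenario; similarly for `W`. -/
structure Mechanism where
  xV1 : ℝ × ℝ → ℝ × ℝ → Bool
  xV2 : ℝ × ℝ → ℝ × ℝ → Bool
  xW1 : ℝ × ℝ → ℝ × ℝ → Bool
  xW2 : ℝ × ℝ → ℝ × ℝ → Bool
  pV1 : ℝ × ℝ → ℝ × ℝ → ℝ
  pV2 : ℝ × ℝ → ℝ × ℝ → ℝ
  pW1 : ℝ × ℝ → ℝ × ℝ → ℝ
  pW2 : ℝ × ℝ → ℝ × ℝ → ℝ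
  feas1 : ∀ v w, ¬(xV1 v w = true ∧ xW1 v w = true)
  feas2 : ∀ v w, ¬(xV2 v w = true ∧ xW2 v w = true)

/-- Unit-demand value of a bidder with type `t` for the set of items indicated by `a1, a2`. -/
def setVal (t : ℝ × ℝ) (a1 a2 : Bool) : ℝ :=
  if a1 then (if a2 then max t.1 t.2 else t.1) else (if a2 then t.2 else 0)

/-- Utility of `V` with true type `t`, report `r`, opponent report `w`, when only item 1 arrives. -/
def uV1 (m : Mechanism) (t r w : ℝ × ℝ) : ℝ := (if m.xV1 r w then t.1 else 0) - m.pV1 r w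

/-- Utility of `V` with true type `t`, report `r`, opponent report `w`, when both items arrive. -/
def uV2 (m : Mechanism) (t r w : ℝ × ℝ) : ℝ := setVal t (m.xV1 r w) (m.xV2 r w) - m.pV2 r w

def uW1 (m : Mechanism) (v t r : ℝ × ℝ) : ℝ := (if m.xW1 v r then t.1 else 0) - m.pW1 v r

def uW2 (m : Mechanism) (v t r : ℝ × ℝ) : ℝ := setVal t (m.xW1 v r) (m.xW2 v r) - m.pW2 v r

/-- Dominant-strategy incentive compatibility in every arrival scenario. -/
def DSIC (m : Mechanism) : Prop :=
  (∀ t r w, Nn t → Nn r → Nn w → uV1 m t r w ≤ uV1 m t t w) ∧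
  (∀ t r w, Nn t → Nn r → Nn w → uV2 m t r w ≤ uV2 m t t w) ∧
  (∀ v t r, Nn v → Nn t → Nn r → uW1 m v t r ≤ uW1 m v t t) ∧
  (∀ v t r, Nn v → Nn t → Nn r → uW2 m v t r ≤ uW2 m v t t)

/-- Individual rationality: truthful reporting gives nonnegative utility in every scenario. -/
def IR (m : Mechanism) : Prop :=
  ∀ v w, Nn v → Nn w →
    0 ≤ uV1 m v v w ∧ 0 ≤ uV2 m v v w ∧ 0 ≤ uW1 m v w w ∧ 0 ≤ uW2 m v w w

/-- Welfare of the mechanism's allocation when only item 1 arrives. -/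
def welfare1 (m : Mechanism) (v w : ℝ × ℝ) : ℝ :=
  (if m.xV1 v w then v.1 else 0) + (if m.xW1 v w then w.1 else 0)

/-- Welfare of the mechanism's allocation when both items arrive. -/
def welfare2 (m : Mechanism) (v w : ℝ × ℝ) : ℝ :=
  setVal v (m.xV1 v w) (m.xV2 v w) + setVal w (m.xW1 v w) (m.xW2 v w)

/-- Optimal welfare when only item 1 arrives. -/
def opt1 (v w : ℝ × ℝ) : ℝ := max v.1 w.1

/-- Optimal (max-weight matching) welfare when both items arrive. -/
def opt2 (v w : ℝ × ℝ) : ℝ := max (v.1 + w.2) (v.2 + w.1)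

/-- The mechanism achieves approximation factor `H` to the optimal social welfare,
in every arrival scenario and for all reports. -/
def ApproxH (m : Mechanism) (H : ℝ) : Prop :=
  ∀ v w, Nn v → Nn w → opt1 v w ≤ H * welfare1 m v w ∧ opt2 v w ≤ H * welfare2 m v w

/-- Real-valued item-1 threshold function for bidder `V`. -/
def Thresh1 (m : Mechanism) (π₁ : ℝ × ℝ → ℝ) : Prop :=
  ∀ w v, Nn w → Nn v →
    (π₁ w < v.1 → m.xV1 v w = true) ∧ (v.1 < π₁ w → m.xV1 v w = false)

/-- Real-valued item-2 threshold function (with threshold payment) for bidder `V`,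
conditional on losing item 1. -/
def Thresh2 (m : Mechanism) (π₁ π₂ : ℝ × ℝ → ℝ) : Prop :=
  ∀ w v, Nn w → 0 < w.1 → Nn v → v.1 < π₁ w →
    (π₂ w < v.2 → m.xV2 v w = true ∧ m.pV2 v w = π₂ w) ∧
    (v.2 < π₂ w → m.xV2 v w = false ∧ m.pV2 v w = 0)

/-- When `V` wins only item 1 (in the both-items scenario) he pays `π₁ w`. -/
def PayOne (m : Mechanism) (π₁ : ℝ × ℝ → ℝ) : Prop :=
  ∀ w v, Nn w → Nn v → m.xV1 v w = true → m.xV2 v w = false → m.pV2 v w = π₁ w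

/-- Every `v` in the region `T_R^V(w)` wins both items and pays `π₂ w`. -/
def TRBoth (m : Mechanism) (π₁ π₂ : ℝ × ℝ → ℝ) : Prop :=
  ∀ w v, Nn w → 0 < w.1 → Nn v → π₁ w < v.1 → v.1 - π₁ w < v.2 - π₂ w →
    m.xV1 v w = true ∧ m.xV2 v w = true ∧ m.pV2 v w = π₂ w

/-- for a DSIC + IR mechanism with approximation factor `H`,
for `N ≥ 2H`, `ε < 1/H` and `w ∈ S_{N,ε}`, the thresholds satisfy
`π₂(w) > π₁(w)` strictly; in particular `π₂(w) ≥ 1` while `π₁(w) < H·ε`. -/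
theorem pi2_strictly_above_pi1 (m : Mechanism) (hD : DSIC m) (hIR : IR m)
    (H : ℝ) (hH : 1 ≤ H) (hA : ApproxH m H)
    (π₁ π₂ : ℝ × ℝ → ℝ)
    (h1 : Thresh1 m π₁) (h2 : Thresh2 m π₁ π₂) :
    ∀ N ε : ℝ, 2 * H ≤ N → ε < 1 / H →
      ∀ w : ℝ × ℝ, 0 < w.1 → w.1 < ε → w.2 = N →
        π₁ w < π₂ w ∧ 1 ≤ π₂ w ∧ π₁ w < H * ε := by
  intro N ε hN hε w hw1 hwε hwN
  have hH0 : (0:ℝ) < H := lt_of_lt_of_le one_pos hH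
  have hNnw : Nn w := ⟨le_of_lt hw1, by rw [hwN]; linarith⟩
  have hε0 : (0:ℝ) < ε := lt_trans hw1 hwε
  have hHε1 : H * ε < 1 := by
    rw [lt_div_iff₀ hH0] at hε; linarith [hε]
  -- Step A : π₁ w < H * ε
  have hA1 : π₁ w < H * ε := by
    by_contra hc
    push_neg at hc
    set v : ℝ × ℝ := ((H * w.1 + H * ε)/2, 0) with hv
    have hv1 : v.1 = (H * w.1 + H * ε)/2 := rfl
    have hHw : H * w.1 < H * ε := by nlinarith
    have hv1lt : v.1 < π₁ w := by rw [hv1]; linarith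
    have hvN : Nn v := ⟨by rw [hv1]; nlinarith, le_refl 0⟩
    have hx : m.xV1 v w = false := (h1 w v hNnw hvN).2 hv1lt
    have hopt := (hA v w hvN hNnw).1
    rw [welfare1, hx] at hopt
    simp only [Bool.false_eq_true, if_false, zero_add] at hopt
    have hle : (if m.xW1 v w then w.1 else 0) ≤ w.1 := by
      by_cases hb : m.xW1 v w <;> simp [hb] <;> linarith
    have h1' : opt1 v w ≥ v.1 := le_max_left _ _
    rw [hv1] at h1'
    nlinarith [hopt, hle, h1']
  -- Step B : w.1 ≤ H * π₁ w
  have hB : w.1 ≤ H * π₁ w := by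
    by_contra hc
    push_neg at hc
    have hπlt : π₁ w < w.1 / H := by rw [lt_div_iff₀ hH0]; nlinarith
    have h0lt : (0:ℝ) < w.1 / H := div_pos hw1 hH0
    set c : ℝ := max (π₁ w) 0 with hcdef
    have hclt : c < w.1 / H := max_lt hπlt h0lt
    set v : ℝ × ℝ := ((c + w.1 / H)/2, 0) with hv
    have hv1 : v.1 = (c + w.1 / H)/2 := rfl
    have hc0 : 0 ≤ c := le_max_right _ _
    have hvN : Nn v := ⟨by rw [hv1]; linarith, le_refl 0⟩
    have hπc : π₁ w ≤ c := le_max_left _ _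
    have hv1gt : π₁ w < v.1 := by rw [hv1]; linarith
    have hx : m.xV1 v w = true := (h1 w v hNnw hvN).1 hv1gt
    have hxw : m.xW1 v w = false := by
      by_contra hxw
      exact m.feas1 v w ⟨hx, by simpa using hxw⟩
    have hopt := (hA v w hvN hNnw).1
    rw [welfare1, hx, hxw] at hopt
    simp only [Bool.false_eq_true, if_true, if_false, add_zero] at hopt
    have h1' : opt1 v w ≥ w.1 := le_max_right _ _
    have hv1small : H * v.1 < w.1 := by
      rw [hv1]
      have : (c + w.1 / H)/2 < w.1 / H := by linarith
      calc H * ((c + w.1 / H)/2) < H * (w.1 / H) := by nlinarith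
        _ = w.1 := by field_simp
    rw [hv1] at hv1small
    rw [hv1] at hopt
    linarith
  -- Step C : 1 ≤ π₂ w
  have hC : 1 ≤ π₂ w := by
    by_contra hc
    push_neg at hc
    set d : ℝ := max (π₂ w) 0 with hddef
    have hd1 : d < 1 := max_lt hc one_pos
    have hd0 : 0 ≤ d := le_max_right _ _
    set v : ℝ × ℝ := (w.1 / (2 * H), (d + 1)/2) with hv
    have hv1 : v.1 = w.1 / (2 * H) := rfl
    have hv2 : v.2 = (d + 1)/2 := rfl
    have h2H : (0:ℝ) < 2 * H := by linarith
    have hv1pos : 0 < v.1 := by rw [hv1]; positivity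
    have hvN : Nn v := ⟨le_of_lt hv1pos, by rw [hv2]; linarith⟩
    have hv1lt : v.1 < π₁ w := by
      rw [hv1]
      have h1' : w.1 / (2 * H) < w.1 / H := by
        apply div_lt_div_of_pos_left hw1 hH0; linarith
      have h2' : w.1 / H ≤ π₁ w := by rw [div_le_iff₀ hH0]; nlinarith
      linarith
    have hv2gt : π₂ w < v.2 := by
      rw [hv2]
      have : π₂ w ≤ d := le_max_left _ _
      linarith
    have hv2lt : v.2 < 1 := by rw [hv2]; linarith
    obtain ⟨hxV2, -⟩ := (h2 w v hNnw hw1 hvN hv1lt).1 hv2gt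
    have hxV1 : m.xV1 v w = false := (h1 w v hNnw hvN).2 hv1lt
    have hxW2 : m.xW2 v w = false := by
      by_contra hxw
      exact m.feas2 v w ⟨hxV2, by simpa using hxw⟩
    have hopt := (hA v w hvN hNnw).2
    rw [welfare2, hxV1, hxV2, hxW2, setVal, setVal] at hopt
    simp only [if_false, if_true, Bool.false_eq_true] at hopt
    have hwle : (if m.xW1 v w = true then w.1 else 0) ≤ w.1 := by
      by_cases hb : m.xW1 v w <;> simp [hb] <;> linarith
    have h1' : opt2 v w ≥ v.1 + w.2 := le_max_left _ _
    have hbig : N ≤ opt2 v w := by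
      rw [hwN] at h1'; linarith
    have hsmall : H * (v.2 + (if m.xW1 v w = true then w.1 else 0)) < 2 * H := by
      nlinarith
    nlinarith [hopt, hbig, hsmall]
  refine ⟨lt_of_lt_of_le (lt_trans hA1 hHε1) hC, hC, hA1⟩
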